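/- Let a, b, c be real with abc ≠ 0, ac > 0 and b² − 4ac > 0, (a_n) satisfy c·a_{n+2} + b·a_{n+1} + a·a_n = 0 with (a_0, a_1) ≠ (0,0) and a_0·b·(a_1 c + b a_0) ≤ 0, and let α be the root of a t² + b t + c of largest modulus. Then there exists M such that for all m ≥ M, every complex zero z of P_m(z) = ∑_{n=0}^m a_n z^n satisfies |z| ≤ |c|/(|a|·|α|). -/

import Mathlib

lemma ek_aux (q : ℕ → ℝ) (m : ℕ) (h0 : 0 ≤ q 0) (hmono : ∀ k, q k ≤ q (k+1))
    (hm : 0 < q m) (w : ℂ)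
    (hsum : ∑ n ∈ Finset.range (m+1), (q n : ℂ) * w ^ n = 0) :
    ‖w‖ ≤ 1 := by
  by_contra hgt
  push_neg at hgt
  set ρ := ‖w‖ with hρ
  have hρ0 : 0 < ρ := lt_trans one_pos hgt
  have hsum2 : ∑ n ∈ Finset.range (m+1), (q n : ℂ) * w ^ (n+1) = 0 := by
    have h : ∑ n ∈ Finset.range (m+1), (q n : ℂ) * w ^ (n+1)
        = w * ∑ n ∈ Finset.range (m+1), (q n : ℂ) * w ^ n := by
      rw [Finset.mul_sum]
      exact Finset.sum_congr rfl (fun n _ => by ring)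
    rw [h, hsum, mul_zero]
  have e1 : (∑ n ∈ Finset.range m, (q n : ℂ) * w ^ (n+1)) + (q m : ℂ) * w ^ (m+1) = 0 := by
    rw [← Finset.sum_range_succ (fun n => (q n : ℂ) * w ^ (n+1)) m]; exact hsum2
  have e2 : (∑ n ∈ Finset.range m, (q (n+1) : ℂ) * w ^ (n+1)) + (q 0 : ℂ) * w ^ 0 = 0 := by
    rw [← Finset.sum_range_succ' (fun n => (q n : ℂ) * w ^ n) m]; exact hsum
  have key : (q m : ℂ) * w ^ (m+1)
      = (q 0 : ℂ) + ∑ n ∈ Finset.range m, ((q (n+1) - q n : ℝ) : ℂ) * w ^ (n+1) := by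
    have h3 : ∑ n ∈ Finset.range m, ((q (n+1) - q n : ℝ) : ℂ) * w ^ (n+1)
        = (∑ n ∈ Finset.range m, (q (n+1) : ℂ) * w ^ (n+1))
          - ∑ n ∈ Finset.range m, (q n : ℂ) * w ^ (n+1) := by
      rw [← Finset.sum_sub_distrib]
      exact Finset.sum_congr rfl (fun n _ => by push_cast; ring)
    rw [h3]
    linear_combination e1 - e2
  have hqn : ∀ n, 0 ≤ q n := by
    intro n; induction n with
    | zero => exact h0
    | succ k ih => exact le_trans ih (hmono k)
  have h1ρm : (1:ℝ) ≤ ρ ^ m := by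
    calc (1:ℝ) = 1 ^ m := (one_pow m).symm
    _ ≤ ρ ^ m := pow_le_pow_left₀ zero_le_one hgt.le m
  have hbound : q m * ρ ^ (m+1) ≤ q m * ρ ^ m := by
    have habs1 : ‖(q m : ℂ) * w ^ (m+1)‖ = q m * ρ ^ (m+1) := by
      rw [norm_mul, norm_pow, Complex.norm_real, Real.norm_eq_abs, abs_of_nonneg (hqn m)]
    have t1 : ‖(q 0 : ℂ)‖ = q 0 := by rw [Complex.norm_real, Real.norm_eq_abs, abs_of_nonneg h0]
    have t2 : ‖∑ n ∈ Finset.range m, ((q (n+1) - q n : ℝ) : ℂ) * w ^ (n+1)‖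
        ≤ ∑ n ∈ Finset.range m, (q (n+1) - q n) * ρ ^ (n+1) := by
      refine le_trans (norm_sum_le _ _) (le_of_eq ?_)
      refine Finset.sum_congr rfl (fun n _ => ?_)
      rw [norm_mul, norm_pow, Complex.norm_real, Real.norm_eq_abs, abs_of_nonneg (by linarith [hmono n])]
    have h4 : q 0 + ∑ n ∈ Finset.range m, (q (n+1) - q n) * ρ ^ (n+1)
        ≤ q 0 * ρ ^ m + ∑ n ∈ Finset.range m, (q (n+1) - q n) * ρ ^ m := by
      apply add_le_add
      · nlinarith [h1ρm, h0]
      · apply Finset.sum_le_sum; intro n hn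
        have hnm : n + 1 ≤ m := Finset.mem_range.mp hn
        have hpow : ρ ^ (n+1) ≤ ρ ^ m := pow_le_pow_right₀ hgt.le hnm
        nlinarith [hmono n]
    have h5 : q 0 * ρ ^ m + ∑ n ∈ Finset.range m, (q (n+1) - q n) * ρ ^ m = q m * ρ ^ m := by
      rw [← Finset.sum_mul, Finset.sum_range_sub (fun i => q i)]
      ring
    calc q m * ρ ^ (m+1) = ‖(q m : ℂ) * w ^ (m+1)‖ := habs1.symm
      _ = ‖(q 0 : ℂ) + ∑ n ∈ Finset.range m, ((q (n+1) - q n : ℝ) : ℂ) * w ^ (n+1)‖ := by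
          rw [key]
      _ ≤ ‖(q 0 : ℂ)‖
          + ‖∑ n ∈ Finset.range m, ((q (n+1) - q n : ℝ) : ℂ) * w ^ (n+1)‖ :=
        norm_add_le _ _
      _ ≤ q 0 + ∑ n ∈ Finset.range m, (q (n+1) - q n) * ρ ^ (n+1) := add_le_add (le_of_eq t1) t2
      _ ≤ q 0 * ρ ^ m + ∑ n ∈ Finset.range m, (q (n+1) - q n) * ρ ^ m := h4
      _ = q m * ρ ^ m := h5
  have hps : ρ ^ (m+1) = ρ ^ m * ρ := pow_succ ρ m
  nlinarith [mul_pos hm (pow_pos hρ0 m), hgt, hbound, hps]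

set_option maxHeartbeats 1000000 in
theorem zeros_inside_ball_CD_pos
    (a b c : ℝ) (habc : a * b * c ≠ 0) (hac : 0 < a * c) (hdisc : b ^ 2 - 4 * a * c > 0)
    (α : ℝ) (hα : a * α ^ 2 + b * α + c = 0)
    (hαmax : ∀ β : ℝ, a * β ^ 2 + b * β + c = 0 → |β| ≤ |α|)
    (aseq : ℕ → ℝ)
    (hrec : ∀ n : ℕ, c * aseq (n + 2) + b * aseq (n + 1) + a * aseq n = 0)
    (hinit : (aseq 0, aseq 1) ≠ (0, 0))
    (hsign : aseq 0 * b * (aseq 1 * c + b * aseq 0) ≤ 0) :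
    ∃ M : ℕ, ∀ m ≥ M, ∀ z : ℂ,
      (∑ n ∈ Finset.range (m + 1), (aseq n : ℂ) * z ^ n) = 0 →
      ‖z‖ ≤ |c| / (|a| * |α|) := by
  have ha : a ≠ 0 := fun h => habc (by rw [h]; ring)
  have hb : b ≠ 0 := fun h => habc (by rw [h]; ring)
  have hc : c ≠ 0 := fun h => habc (by rw [h]; ring)
  have hα0 : α ≠ 0 := by
    intro h; rw [h] at hα; simp at hα; exact hc hα
  have haα : a * α ≠ 0 := mul_ne_zero ha hα0
  obtain ⟨β, hβdef⟩ : ∃ β : ℝ, β = c / (a * α) := ⟨_, rfl⟩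
  have hβ0 : β ≠ 0 := by rw [hβdef]; exact div_ne_zero hc haα
  have hαβc : a * α * β = c := by rw [hβdef]; field_simp
  have hVb : a * (α + β) + b = 0 := by
    have h : α * (a * (α + β) + b) = 0 := by linear_combination hα + hαβc
    exact (mul_eq_zero.mp h).resolve_left hα0
  have hβroot : a * β ^ 2 + b * β + c = 0 := by
    linear_combination β * hVb - hαβc
  have hαβpos : 0 < α * β := by
    have h2 : a ^ 2 * (α * β) = a * c := by linear_combination a * hαβc
    nlinarith [sq_nonneg a, hac, h2]
  have hα2 : (0:ℝ) < α ^ 2 := lt_of_le_of_ne (sq_nonneg α) (Ne.symm (pow_ne_zero 2 hα0))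
  have hne : β ≠ α := by
    intro h
    rw [h] at hαβc
    have h2 : b * α = -2 * c := by linear_combination hα - hαβc
    have h3 : b ^ 2 * α ^ 2 = 4 * c ^ 2 := by linear_combination (b * α - 2 * c) * h2
    have h4 : c * (b ^ 2 - 4 * a * c) = 0 := by linear_combination a * h3 - b ^ 2 * hαβc
    rcases mul_eq_zero.mp h4 with h5 | h5
    · exact hc h5
    · linarith
  have hβlt : |β| < |α| := by
    rcases lt_or_eq_of_le (hαmax β hβroot) with h | h
    · exact h
    · rcases abs_eq_abs.mp h with h1 | h1
      · exact absurd h1 hne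
      · rw [h1] at hαβpos; nlinarith [sq_nonneg α]
  obtain ⟨t, htdef⟩ : ∃ t : ℝ, t = β / α := ⟨_, rfl⟩
  have ht0 : 0 < t := by
    have h : β / α = (α * β) / α ^ 2 := by field_simp
    rw [htdef, h]
    exact div_pos hαβpos hα2
  have hβt : β = t * α := by rw [htdef]; field_simp
  have ht1 : t < 1 := by
    have h5 : |β| / |α| < 1 := (div_lt_one (abs_pos.mpr hα0)).mpr hβlt
    have h6 : |t| = |β| / |α| := by rw [htdef]; exact abs_div β α
    calc t ≤ |t| := le_abs_self t
      _ < 1 := by rw [h6]; exact h5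
  have h1t : (0:ℝ) < 1 - t := by linarith
  have h1t' : (1:ℝ) - t ≠ 0 := ne_of_gt h1t
  have hkey : c * t ^ 2 + b * β * t + a * β ^ 2 = 0 := by
    rw [hβt]; linear_combination t ^ 2 * hα
  obtain ⟨A, hAdef⟩ : ∃ A : ℝ, A = (aseq 0 - aseq 1 * β) / (1 - t) := ⟨_, rfl⟩
  obtain ⟨B, hBdef⟩ : ∃ B : ℝ, B = (aseq 1 * β - t * aseq 0) / (1 - t) := ⟨_, rfl⟩
  have e1 : aseq 0 = A + B := by rw [hAdef, hBdef]; field_simp; ring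
  have e2 : aseq 1 * β = A * t + B := by rw [hAdef, hBdef]; field_simp; ring
  have hd : ∀ n, aseq n * β ^ n = A * t ^ n + B ∧
      aseq (n+1) * β ^ (n+1) = A * t ^ (n+1) + B := by
    intro n; induction n with
    | zero =>
      constructor
      · simpa using e1
      · simpa using e2
    | succ k ih =>
      refine ⟨ih.2, ?_⟩
      have hr := hrec k
      have hmain : c * (aseq (k+2) * β ^ (k+2)) = c * (A * t ^ (k+2) + B) := by
        have expand : c * (aseq (k+2) * β ^ (k+2))
            = (c * aseq (k+2) + b * aseq (k+1) + a * aseq k) * β ^ (k+2)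
              - b * β * (aseq (k+1) * β ^ (k+1)) - a * β ^ 2 * (aseq k * β ^ k) := by ring
        rw [expand, hr, ih.1, ih.2]
        linear_combination (-(A * t ^ k)) * hkey + (-B) * hβroot
      exact mul_left_cancel₀ hc hmain
  have e2' : aseq 1 * (t * α) = A * t + B := by rw [← hβt]; exact e2
  have key2 : aseq 0 * b * (aseq 1 * c + b * aseq 0)
      = a ^ 2 * α ^ 2 * (1 + t) * ((A + B) * (A + t * B)) := by
    have hbeq : b = -(a * (α + β)) := by linarith
    rw [e1, hbeq, ← hαβc, hβt]
    linear_combination (-(a ^ 2 * α ^ 2 * (1 + t) * (A + B))) * e2'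
  have ha2 : (0:ℝ) < a ^ 2 := lt_of_le_of_ne (sq_nonneg a) (Ne.symm (pow_ne_zero 2 ha))
  have hAB : (A + B) * (A + t * B) ≤ 0 := by
    have hKpos : 0 < a ^ 2 * α ^ 2 * (1 + t) :=
      mul_pos (mul_pos ha2 hα2) (by linarith)
    nlinarith [hsign, key2, hKpos]
  have hBne : B ≠ 0 := by
    intro hB0
    rw [hB0] at hAB
    have hA2 : A * A ≤ 0 := by nlinarith [hAB]
    have hA0 : A = 0 := mul_self_eq_zero.mp (le_antisymm hA2 (mul_self_nonneg A))
    have h00 : aseq 0 = 0 := by rw [e1, hA0, hB0]; ring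
    have h10 : aseq 1 = 0 := by
      have h := e2; rw [hA0, hB0] at h
      have h' : aseq 1 * β = 0 := by linarith [h]
      rcases mul_eq_zero.mp h' with h'' | h''
      · exact h''
      · exact absurd h'' hβ0
    exact hinit (by rw [h00, h10])
  obtain ⟨r, hrdef⟩ : ∃ r : ℝ, r = -(A / B) := ⟨_, rfl⟩
  have hAr : A = -(r * B) := by rw [hrdef]; field_simp
  have hB2 : 0 < B ^ 2 := lt_of_le_of_ne (sq_nonneg B) (Ne.symm (pow_ne_zero 2 hBne))
  have h3 : B ^ 2 * ((1 - r) * (t - r)) ≤ 0 := by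
    have h : (A + B) * (A + t * B) = B ^ 2 * ((1 - r) * (t - r)) := by rw [hAr]; ring
    calc B ^ 2 * ((1 - r) * (t - r)) = (A + B) * (A + t * B) := h.symm
      _ ≤ 0 := hAB
  have hrt : t ≤ r := by
    by_contra hcon; push_neg at hcon
    have hp : 0 < (1 - r) * (t - r) := mul_pos (by linarith) (by linarith)
    exact absurd h3 (not_le.mpr (mul_pos hB2 hp))
  have hr1 : r ≤ 1 := by
    by_contra hcon; push_neg at hcon
    have hp : 0 < (1 - r) * (t - r) :=
      mul_pos_of_neg_of_neg (by linarith) (by linarith)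
    exact absurd h3 (not_le.mpr (mul_pos hB2 hp))
  have hrpos : 0 < r := lt_of_lt_of_le ht0 hrt
  have hq : ∀ n, aseq n * β ^ n = B * (1 - r * t ^ n) := by
    intro n
    have h := (hd n).1
    rw [hAr] at h
    linear_combination h
  have hq0 : (0:ℝ) ≤ 1 - r * t ^ 0 := by
    rw [pow_zero]; linarith
  have hqmono : ∀ k, 1 - r * t ^ k ≤ 1 - r * t ^ (k+1) := by
    intro k
    have h1 : 0 ≤ r * t ^ k * (1 - t) :=
      mul_nonneg (mul_nonneg hrpos.le (pow_nonneg ht0.le k)) (by linarith)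
    have h2 : t ^ (k+1) = t ^ k * t := pow_succ t k
    nlinarith [h1, h2]
  have hqm : ∀ n, 1 ≤ n → (0:ℝ) < 1 - r * t ^ n := by
    intro n hn
    have h1 : t ^ n ≤ t ^ 1 := pow_le_pow_of_le_one ht0.le ht1.le hn
    rw [pow_one] at h1
    have h2 : r * t ^ n ≤ t ^ n := by
      nlinarith [mul_nonneg (by linarith : (0:ℝ) ≤ 1 - r) (pow_nonneg ht0.le n)]
    linarith
  refine ⟨1, fun m hm z hz => ?_⟩
  have hβC : (β:ℂ) ≠ 0 := Complex.ofReal_ne_zero.mpr hβ0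
  have hBC : (B:ℂ) ≠ 0 := Complex.ofReal_ne_zero.mpr hBne
  have hterm : ∀ n, (aseq n : ℂ) * z ^ n
      = (B:ℂ) * (((1 - r * t ^ n : ℝ) : ℂ) * (z / (β:ℂ)) ^ n) := by
    intro n
    have hcast : ((aseq n * β ^ n : ℝ) : ℂ) = ((B * (1 - r * t ^ n) : ℝ) : ℂ) := by
      rw [hq n]
    push_cast at hcast
    have hβn : (β:ℂ) ^ n ≠ 0 := pow_ne_zero n hβC
    rw [div_pow]
    push_cast
    field_simp
    linear_combination (z ^ n) * hcast
  have hsum0 : ∑ n ∈ Finset.range (m+1), ((1 - r * t ^ n : ℝ) : ℂ) * (z / (β:ℂ)) ^ n = 0 := by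
    have h' : (B:ℂ) * ∑ n ∈ Finset.range (m+1),
        ((1 - r * t ^ n : ℝ) : ℂ) * (z / (β:ℂ)) ^ n = 0 := by
      rw [Finset.mul_sum, ← hz]
      exact Finset.sum_congr rfl (fun n _ => (hterm n).symm)
    exact (mul_eq_zero.mp h').resolve_left hBC
  have habs := ek_aux (fun n => 1 - r * t ^ n) m hq0 hqmono (hqm m hm) (z / (β:ℂ)) hsum0
  rw [norm_div, Complex.norm_real, Real.norm_eq_abs] at habs
  have hβabs : 0 < |β| := abs_pos.mpr hβ0
  have hzb : ‖z‖ ≤ |β| := by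
    rw [div_le_one hβabs] at habs; exact habs
  calc ‖z‖ ≤ |β| := hzb
    _ = |c| / (|a| * |α|) := by rw [hβdef, abs_div, abs_mul]
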